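/- arXiv:0710.0037 — 4 statements merged into one kernel-verified Lean document; each statement's English description precedes it below -/
import Mathlib

section
/- Σ_{n=1}^{∞} (1 - 2^{-2n}) · ζ(2n) / (n · (2n + 1)) = log 2, where the series converges. -/
open Complex Real Filter Finset Topology

noncomputable def Fterm (j n : ℕ) : ℝ :=
  (1 / (2 * (j:ℝ) + 1)) ^ (2 * n + 2) / (((n:ℝ) + 1) * (2 * (n:ℝ) + 3))

noncomputable def cseq : ℕ → ℝ
  | 0 => 2 - 2 * Real.log 2
  | (j+1) => 2 - Real.log (2*(j:ℝ)+2) - Real.log (2*(j:ℝ)+4) + 2*Real.log (2*(j:ℝ)+3)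
      - (2*(j:ℝ)+3) * (Real.log ((j:ℝ)+2) - Real.log ((j:ℝ)+1))

lemma Fterm_nonneg (j n : ℕ) : 0 ≤ Fterm j n := by
  unfold Fterm; positivity

lemma rowSucc (j : ℕ) : HasSum (fun n => Fterm (j+1) n) (cseq (j+1)) := by
  set a : ℝ := (j:ℝ) with ha
  have ha0 : (0:ℝ) ≤ a := Nat.cast_nonneg j
  set x : ℝ := 1 / (2*a+3) with hx
  have h3pos : (0:ℝ) < 2*a+3 := by linarith
  have hx0 : 0 < x := by positivity
  have hxlt : x < 1 := by rw [hx, div_lt_one h3pos]; linarith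
  have hx2 : |x^2| < 1 := by
    rw [_root_.abs_of_nonneg (sq_nonneg x)]; nlinarith
  have h1 := Real.hasSum_pow_div_log_of_abs_lt_one hx2
  have h2 := Real.hasSum_log_one_add_inv (a := a+1) (by linarith)
  have e1 : (1:ℝ)/(2*(a+1)+1) = x := by rw [hx]; ring_nf
  rw [e1] at h2
  have h3 : HasSum (fun n : ℕ => (2:ℝ)*(1/(2*((n:ℝ)+1)+1))*x^(2*(n+1)+1))
      (Real.log (1+(a+1)⁻¹) - 2*x) := by
    have := (hasSum_nat_add_iff'
      (f := fun k : ℕ => (2:ℝ)*(1/(2*(k:ℝ)+1))*x^(2*k+1)) 1).mpr h2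
    simp only [Finset.sum_range_one] at this
    convert this using 2 with n
    all_goals first | rfl | (push_cast; ring_nf) | norm_num
  have h4 := h3.mul_left (2*a+3)
  have key := h1.sub h4
  convert key using 1
  · rfl
  · funext n
    show Fterm (j+1) n = _
    unfold Fterm
    push_cast
    have hbase : (1/(2*((j:ℝ)+1)+1) : ℝ) = x := by rw [hx, ha]; ring_nf
    have hpow : (x^2)^(n+1) = x^(2*n+2) := by rw [← pow_mul]; ring_nf
    have hpow2 : x^(2*(n+1)+1) = x^(2*n+2) * x := by rw [← pow_succ]; ring_nf
    have hinv : (2*a+3 : ℝ) = 1/x := by rw [hx]; field_simp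
    have hxne : x ≠ 0 := ne_of_gt hx0
    have hn1 : ((n:ℝ)+1) ≠ 0 := by positivity
    have hn3 : (2*(n:ℝ)+3) ≠ 0 := by positivity
    have h2n3 : (2*((n:ℝ)+1)+1) ≠ 0 := by positivity
    rw [hbase, hpow, hpow2, hinv]
    field_simp
    ring
  · show cseq (j+1) = _
    show 2 - Real.log (2*a+2) - Real.log (2*a+4) + 2*Real.log (2*a+3)
      - (2*a+3) * (Real.log (a+2) - Real.log (a+1)) = _
    have e2 : (1:ℝ) - x^2 = (2*a+2)*(2*a+4)/(2*a+3)^2 := by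
      rw [hx]; field_simp; ring
    have e3 : (1:ℝ) + (a+1)⁻¹ = (a+2)/(a+1) := by
      field_simp; ring
    rw [e2, e3, Real.log_div (by positivity) (by positivity),
      Real.log_mul (by positivity) (by positivity),
      Real.log_div (by positivity) (by positivity),
      Real.log_pow]
    have hxx : (2*a+3) * x = 1 := by rw [hx]; field_simp
    push_cast
    linear_combination (-2 : ℝ) * hxx

lemma row0 : HasSum (fun n => Fterm 0 n) (cseq 0) := by
  rw [hasSum_iff_tendsto_nat_of_nonneg (fun n => Fterm_nonneg 0 n)]
  have hps : ∀ N : ℕ, ∑ n ∈ Finset.range N, Fterm 0 n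
      = 2 + 2*((harmonic N : ℝ)) - 2*((harmonic (2*N+1) : ℝ)) := by
    intro N
    induction N with
    | zero => norm_num [harmonic]
    | succ N ih =>
      rw [Finset.sum_range_succ, ih]
      have e1 : 2*(N+1)+1 = (2*N+1)+1+1 := by ring
      rw [e1, harmonic_succ (2*N+1+1), harmonic_succ (2*N+1), harmonic_succ N]
      unfold Fterm
      push_cast
      have h1 : ((N:ℝ)+1) ≠ 0 := by positivity
      have h2 : (2*(N:ℝ)+3) ≠ 0 := by positivity
      field_simp
      ring
  have hcong : ∀ N : ℕ, ∑ n ∈ Finset.range N, Fterm 0 n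
      = 2 - 2*Real.log 2 + (2*(((harmonic N : ℝ)) - Real.log (N+1))
          - 2*(((harmonic (2*N+1) : ℝ)) - Real.log ((2*N+1)+1))) := by
    intro N
    rw [hps N]
    have : Real.log ((2*N+1)+1 : ℝ) = Real.log 2 + Real.log ((N:ℝ)+1) := by
      rw [← Real.log_mul (by norm_num) (by positivity)]
      norm_num; ring_nf
    push_cast
    push_cast at this
    rw [this]; ring
  have h2N : Tendsto (fun N : ℕ => 2*N+1) atTop atTop :=
    tendsto_atTop_mono (fun n => by simp only [id_eq]; omega) tendsto_id
  have hf := Real.tendsto_harmonic_sub_log_add_one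
  have hlim : Tendsto (fun N : ℕ => 2 - 2*Real.log 2 +
      (2*(((harmonic N : ℝ)) - Real.log (N+1))
        - 2*(((harmonic (2*N+1) : ℝ)) - Real.log ((2*N+1)+1)))) atTop
      (𝓝 (2 - 2*Real.log 2 + (2*Real.eulerMascheroniConstant - 2*Real.eulerMascheroniConstant))) := by
    have base := (hf.const_mul 2).sub ((hf.comp h2N).const_mul 2)
    exact tendsto_const_nhds.add (base.congr fun N => by
      simp only [Function.comp_apply]; push_cast; ring)
  have : (2 : ℝ) - 2*Real.log 2 + (2*Real.eulerMascheroniConstant - 2*Real.eulerMascheroniConstant)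
      = cseq 0 := by show _ = 2 - 2 * Real.log 2; ring
  rw [this] at hlim
  exact hlim.congr (fun N => (hcong N).symm)

open Nat in
lemma sum_c (K : ℕ) : ∑ j ∈ Finset.range K, cseq (j+1)
    = 2*K + 2*Real.log ((2*K+1)! : ℝ) - 4*K*Real.log 2 - Real.log (K ! : ℝ)
      - Real.log ((K+1)! : ℝ) - (2*(K:ℝ)+1)*Real.log ((K:ℝ)+1) := by
  induction K with
  | zero => simp
  | succ K ih =>
    rw [Finset.sum_range_succ, ih]
    have e1 : ((2*(K+1)+1)! : ℝ) = (2*(K:ℝ)+3) * ((2*(K:ℝ)+2) * ((2*K+1)! : ℝ)) := by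
      rw [show 2*(K+1)+1 = ((2*K+1)+1)+1 by ring, Nat.factorial_succ, Nat.factorial_succ]
      push_cast; ring
    have e2 : ((K+1+1)! : ℝ) = ((K:ℝ)+2) * (((K+1))! : ℝ) := by
      rw [Nat.factorial_succ]; push_cast; ring
    have e3 : (((K+1))! : ℝ) = ((K:ℝ)+1) * ((K)! : ℝ) := by
      rw [Nat.factorial_succ]; push_cast; ring
    have fpos1 : (0:ℝ) < ((2*K+1)! : ℝ) := by positivity
    have fpos2 : (0:ℝ) < (((K+1))! : ℝ) := by positivity
    have fpos3 : (0:ℝ) < ((K !) : ℝ) := by positivity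
    have l1 : Real.log (2*(K:ℝ)+2) = Real.log 2 + Real.log ((K:ℝ)+1) := by
      rw [← Real.log_mul two_ne_zero (by positivity)]; ring_nf
    have l2 : Real.log (2*(K:ℝ)+4) = Real.log 2 + Real.log ((K:ℝ)+2) := by
      rw [← Real.log_mul two_ne_zero (by positivity)]; ring_nf
    show _ + (2 - Real.log (2*(K:ℝ)+2) - Real.log (2*(K:ℝ)+4) + 2*Real.log (2*(K:ℝ)+3)
      - (2*(K:ℝ)+3) * (Real.log ((K:ℝ)+2) - Real.log ((K:ℝ)+1))) = _
    rw [e1, Real.log_mul (by positivity) (by positivity),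
      Real.log_mul (by positivity) fpos1.ne',
      e2, Real.log_mul (by positivity) fpos2.ne',
      e3, Real.log_mul (by positivity) fpos3.ne', l1, l2]
    push_cast
    ring

open Stirling Nat in
lemma log_factorial {n : ℕ} (hn : n ≠ 0) :
    Real.log (n ! : ℝ) = Real.log (stirlingSeq n) + Real.log (Real.sqrt (2*(n:ℝ)))
      + n * Real.log n - n := by
  have hnpos : (0:ℝ) < n := by positivity
  have h1 : stirlingSeq n = (n ! : ℝ) / (Real.sqrt (2*(n:ℝ)) * ((n:ℝ)/Real.exp 1)^n) := rfl
  have hs : (0:ℝ) < Real.sqrt (2*(n:ℝ)) := Real.sqrt_pos.mpr (by positivity)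
  have hp : (0:ℝ) < ((n:ℝ)/Real.exp 1)^n := by positivity
  have hf : (0:ℝ) < (n ! : ℝ) := by positivity
  rw [h1, Real.log_div hf.ne' (by positivity), Real.log_mul hs.ne' hp.ne', Real.log_pow,
    Real.log_div hnpos.ne' (Real.exp_pos 1).ne', Real.log_exp]
  ring

open Stirling Nat in
lemma tendsto_sum_c :
    Tendsto (fun K => ∑ j ∈ Finset.range K, cseq (j+1)) atTop (𝓝 (3*Real.log 2 - 2)) := by
  have hπ : (0:ℝ) < Real.sqrt π := Real.sqrt_pos.mpr Real.pi_pos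
  have hs : Tendsto (fun n => Real.log (stirlingSeq n)) atTop (𝓝 (Real.log (Real.sqrt π))) :=
    ((Real.continuousAt_log hπ.ne').tendsto).comp tendsto_stirlingSeq_sqrt_pi
  have h2K1 : Tendsto (fun K : ℕ => 2*K+1) atTop atTop :=
    tendsto_atTop_mono (fun n => by simp only [id_eq]; omega) tendsto_id
  have hK1 : Tendsto (fun K : ℕ => K+1) atTop atTop :=
    tendsto_atTop_mono (fun n => by simp only [id_eq]; omega) tendsto_id
  set L := Real.log (Real.sqrt π) with hL
  have hA : Tendsto (fun K : ℕ => 2*Real.log (stirlingSeq (2*K+1)) - Real.log (stirlingSeq K)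
      - Real.log (stirlingSeq (K+1))) atTop (𝓝 0) := by
    have h := (((hs.comp h2K1).const_mul 2).sub hs).sub (hs.comp hK1)
    rw [show (2*L - L - L : ℝ) = 0 by ring] at h
    exact h
  have hnat := tendsto_natCast_atTop_atTop (R := ℝ)
  have hv : Tendsto (fun K : ℕ => 4 + 1/((K:ℝ)^2+(K:ℝ))) atTop (𝓝 4) := by
    have h1 : Tendsto (fun K : ℕ => ((K:ℝ)^2+(K:ℝ))) atTop atTop :=
      tendsto_atTop_mono (fun K => by nlinarith [sq_nonneg (K:ℝ), Nat.cast_nonneg (α := ℝ) K]) hnat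
    have h2 := h1.inv_tendsto_atTop
    have h3 := tendsto_const_nhds (x := (4:ℝ)) (f := atTop (α := ℕ))
    simpa [one_div] using h3.add h2
  have hB : Tendsto (fun K : ℕ => (1/2) * Real.log (4 + 1/((K:ℝ)^2+(K:ℝ)))) atTop
      (𝓝 ((1/2) * Real.log 4)) :=
    (((Real.continuousAt_log (by norm_num)).tendsto).comp hv).const_mul (1/2)
  have hbase := Real.tendsto_mul_log_one_add_div_atTop (1:ℝ)
  have h2Kc : Tendsto (fun K : ℕ => (2*(K:ℝ))) atTop atTop :=
    tendsto_atTop_mono (fun K => by nlinarith [Nat.cast_nonneg (α := ℝ) K]) hnat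
  have hC1 : Tendsto (fun K : ℕ => (2*(K:ℝ)) * Real.log (1 + 1/(2*(K:ℝ)))) atTop (𝓝 1) :=
    hbase.comp h2Kc
  have hloc : Tendsto (fun K : ℕ => Real.log (1 + 1/(2*(K:ℝ)))) atTop (𝓝 0) := by
    have h0 : Tendsto (fun K : ℕ => 1 + 1/(2*(K:ℝ))) atTop (𝓝 1) := by
      simpa [one_div] using (tendsto_const_nhds (x := (1:ℝ)) (f := atTop (α := ℕ))).add
        h2Kc.inv_tendsto_atTop
    simpa [Function.comp_def] using ((Real.continuousAt_log one_ne_zero).tendsto).comp h0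
  have hD1 : Tendsto (fun K : ℕ => ((K:ℝ)) * Real.log (1 + 1/((K:ℝ)))) atTop (𝓝 1) :=
    hbase.comp hnat
  have hlocD : Tendsto (fun K : ℕ => Real.log (1 + 1/((K:ℝ)))) atTop (𝓝 0) := by
    have h0 : Tendsto (fun K : ℕ => 1 + 1/((K:ℝ))) atTop (𝓝 1) := by
      simpa [one_div] using (tendsto_const_nhds (x := (1:ℝ)) (f := atTop (α := ℕ))).add
        hnat.inv_tendsto_atTop
    simpa [Function.comp_def] using ((Real.continuousAt_log one_ne_zero).tendsto).comp h0
  have hΦ : Tendsto (fun K : ℕ =>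
      (2*Real.log (stirlingSeq (2*K+1)) - Real.log (stirlingSeq K) - Real.log (stirlingSeq (K+1)))
      + (1/2) * Real.log (4 + 1/((K:ℝ)^2+(K:ℝ)))
      + 2*Real.log 2
      + (2*((2*(K:ℝ)) * Real.log (1 + 1/(2*(K:ℝ)))) + 2*Real.log (1 + 1/(2*(K:ℝ))))
      - (3*((K:ℝ) * Real.log (1 + 1/((K:ℝ)))) + 2*Real.log (1 + 1/((K:ℝ))))
      - 1) atTop (𝓝 (3*Real.log 2 - 2)) := by
    have h := ((((hA.add hB).add (tendsto_const_nhds (x := 2*Real.log 2))).add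
      ((hC1.const_mul 2).add (hloc.const_mul 2))).sub
      ((hD1.const_mul 3).add (hlocD.const_mul 2))).sub (tendsto_const_nhds (x := (1:ℝ)))
    have hv4 : (0:ℝ) + (1/2) * Real.log 4 + 2*Real.log 2 + (2*1 + 2*0) - (3*1 + 2*0) - 1
        = 3*Real.log 2 - 2 := by
      rw [show (4:ℝ) = 2^2 by norm_num, Real.log_pow]
      push_cast; ring
    rw [hv4] at h
    exact h
  apply hΦ.congr'
  filter_upwards [eventually_ge_atTop 1] with K hK
  have hK0 : K ≠ 0 := by omega
  have hKpos : (0:ℝ) < K := by exact_mod_cast Nat.pos_of_ne_zero hK0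
  rw [sum_c K]
  rw [log_factorial (show 2*K+1 ≠ 0 by omega), log_factorial hK0,
    log_factorial (show K+1 ≠ 0 by omega)]
  have lC : Real.log (1 + 1/(2*(K:ℝ))) = Real.log (2*(K:ℝ)+1) - Real.log 2 - Real.log K := by
    rw [show (1 + 1/(2*(K:ℝ))) = (2*(K:ℝ)+1)/(2*(K:ℝ)) by field_simp,
      Real.log_div (by positivity) (by positivity), Real.log_mul (by norm_num) (by positivity)]
    ring
  have lD : Real.log (1 + 1/((K:ℝ))) = Real.log ((K:ℝ)+1) - Real.log K := by
    rw [show (1 + 1/((K:ℝ))) = ((K:ℝ)+1)/(K:ℝ) by field_simp,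
      Real.log_div (by positivity) (by positivity)]
  have lB : Real.log (4 + 1/((K:ℝ)^2+(K:ℝ)))
      = 2*Real.log (2*(2*(K:ℝ)+1)) - Real.log (2*(K:ℝ)) - Real.log (2*((K:ℝ)+1)) := by
    rw [show (4 + 1/((K:ℝ)^2+(K:ℝ))) = (2*(2*(K:ℝ)+1))^2 / ((2*(K:ℝ))*(2*((K:ℝ)+1))) by
        field_simp; ring,
      Real.log_div (by positivity) (by positivity), Real.log_pow,
      Real.log_mul (x := 2*(K:ℝ)) (y := 2*((K:ℝ)+1)) (by positivity) (by positivity)]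
    push_cast; ring
  rw [lB, lC, lD,
    Real.log_sqrt (by positivity), Real.log_sqrt (by positivity), Real.log_sqrt (by positivity)]
  have lg1 : Real.log (2*(((2*K+1):ℕ):ℝ)) = Real.log (2*(2*(K:ℝ)+1)) := by push_cast; ring_nf
  have lg2 : Real.log (2*(((K+1):ℕ):ℝ)) = Real.log (2*((K:ℝ)+1)) := by push_cast; ring_nf
  rw [lg1, lg2]
  push_cast
  ring

lemma rows (j : ℕ) : HasSum (fun n => Fterm j n) (cseq j) := by
  cases j with
  | zero => exact row0
  | succ j => exact rowSucc j

lemma hasSum_cseq : HasSum cseq (Real.log 2) := by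
  have hnn : ∀ j, 0 ≤ cseq j := fun j => (rows j).nonneg (fun n => Fterm_nonneg j n)
  rw [hasSum_iff_tendsto_nat_of_nonneg hnn]
  rw [← Filter.tendsto_add_atTop_iff_nat 1]
  have he : ∀ K : ℕ, ∑ j ∈ Finset.range (K+1), cseq j
      = (∑ j ∈ Finset.range K, cseq (j+1)) + cseq 0 := fun K => Finset.sum_range_succ' cseq K
  have h := tendsto_sum_c.add (tendsto_const_nhds (x := cseq 0))
  have hval : 3*Real.log 2 - 2 + cseq 0 = Real.log 2 := by
    show _ + (2 - 2*Real.log 2) = _; ring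
  rw [hval] at h
  exact h.congr (fun K => (he K).symm)

noncomputable def rterm (n : ℕ) : ℝ :=
  (1 - (2:ℝ)^(-(2*(n:ℤ)+2))) * (∑' k:ℕ, 1/((k:ℝ)+1)^(2*n+2)) / (((n:ℝ)+1)*(2*(n:ℝ)+3))

lemma col (n : ℕ) : HasSum (fun j => Fterm j n) (rterm n) := by
  set m : ℕ := 2*n+2 with hm
  have hm1 : 1 < m := by omega
  have hm0 : m ≠ 0 := by omega
  set g : ℕ → ℝ := fun k => 1/(k:ℝ)^m with hg'
  have hsum : Summable (fun k : ℕ => 1/((k:ℝ)+1)^m) := by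
    have h0 : Summable g := Real.summable_one_div_nat_pow.mpr hm1
    have h1 := (summable_nat_add_iff (f := g) 1).mpr h0
    exact h1.congr (fun k => by simp only [hg']; push_cast; ring)
  set Z : ℝ := ∑' k:ℕ, 1/((k:ℝ)+1)^m with hZ'
  have hZ : HasSum (fun k : ℕ => 1/((k:ℝ)+1)^m) Z := hsum.hasSum
  have hg : HasSum g Z := by
    have h1 : HasSum (fun k : ℕ => g (k+1)) Z := by
      have he : (fun k : ℕ => g (k+1)) = (fun k : ℕ => 1/((k:ℝ)+1)^m) := by
        funext k; simp only [hg']; push_cast; ring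
      rw [he]; exact hZ
    have h2 := (hasSum_nat_add_iff (f := g) 1).mp h1
    simpa [hg', Finset.sum_range_one, zero_pow hm0] using h2
  have heven : HasSum (fun k => g (2*k)) ((1/(2:ℝ)^m) * Z) := by
    have h1 := hg.mul_left (1/(2:ℝ)^m)
    have he : (fun k : ℕ => g (2*k)) = (fun k : ℕ => (1/(2:ℝ)^m) * g k) := by
      funext k; simp only [hg']; push_cast [mul_pow]
      rw [one_div, one_div, one_div, mul_inv]
    rw [he]; exact h1
  have hoddS : Summable (fun k => g (2*k+1)) :=
    hg.summable.comp_injective (fun a b h => by omega)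
  have hodd := hoddS.hasSum
  have htot := heven.even_add_odd hodd
  have hval : (1/(2:ℝ)^m) * Z + (∑' k, g (2*k+1)) = Z := htot.unique hg
  have hoddZ : HasSum (fun k => g (2*k+1)) (Z - (1/(2:ℝ)^m) * Z) := by
    have : (∑' k, g (2*k+1)) = Z - (1/(2:ℝ)^m) * Z := by linarith
    rwa [this] at hodd
  have hfinal := hoddZ.div_const (((n:ℝ)+1)*(2*(n:ℝ)+3))
  have he2 : (fun j : ℕ => g (2*j+1) / (((n:ℝ)+1)*(2*(n:ℝ)+3))) = fun j => Fterm j n := by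
    funext j
    simp only [hg', Fterm]
    rw [one_div, ← inv_pow]
    push_cast
    ring
  rw [he2] at hfinal
  have hv2 : (Z - (1/(2:ℝ)^m) * Z) / (((n:ℝ)+1)*(2*(n:ℝ)+3)) = rterm n := by
    rw [rterm]
    rw [show (-(2*(n:ℤ)+2)) = -((m : ℕ) : ℤ) by omega, zpow_neg, zpow_natCast, ← hZ']
    ring
  rwa [hv2] at hfinal

lemma hasSum_rterm : HasSum rterm (Real.log 2) := by
  have hFsummable : Summable (fun p : ℕ×ℕ => Fterm p.1 p.2) := by
    rw [summable_prod_of_nonneg (fun p => Fterm_nonneg p.1 p.2)]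
    exact ⟨fun j => (rows j).summable,
      hasSum_cseq.summable.congr (fun j => ((rows j).tsum_eq).symm)⟩
  have h1 := hFsummable.hasSum
  have h2 := h1.prod_fiberwise (fun j => rows j)
  have h3 : (∑' p : ℕ×ℕ, Fterm p.1 p.2) = Real.log 2 := h2.unique hasSum_cseq
  rw [h3] at h1
  have hswap : HasSum (fun p : ℕ×ℕ => Fterm p.2 p.1) (Real.log 2) := ((Equiv.prodComm ℕ ℕ).hasSum_iff).mpr h1
  exact hswap.prod_fiberwise (fun n => col n)

/-- `Σ_{n=1}^∞ (1 - 2^(-2n)) ζ(2n) / (n (2n+1)) = log 2`, the series converging. -/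
theorem stmt_1 :
    HasSum
      (fun n : ℕ =>
        (1 - (2 : ℂ) ^ (-(2 * ((n : ℤ) + 1)))) * riemannZeta (2 * ((n : ℂ) + 1)) /
          (((n : ℂ) + 1) * (2 * ((n : ℂ) + 1) + 1)))
      (Real.log 2) := by
  have h2 := (Complex.hasSum_ofReal (f := rterm) (x := Real.log 2)).mpr hasSum_rterm
  have hfun : (fun n : ℕ =>
      (1 - (2 : ℂ) ^ (-(2 * ((n : ℤ) + 1)))) * riemannZeta (2 * ((n : ℂ) + 1)) /
        (((n : ℂ) + 1) * (2 * ((n : ℂ) + 1) + 1)))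
      = fun n : ℕ => ((rterm n : ℝ) : ℂ) := by
    funext n
    have hs : (2*((n:ℂ)+1)) = ((2*n+2 : ℕ) : ℂ) := by push_cast; ring
    have hre : 1 < (2*((n:ℂ)+1)).re := by
      rw [hs, Complex.natCast_re]; exact_mod_cast (by omega : 1 < 2*n+2)
    have h0 := zeta_eq_tsum_one_div_nat_add_one_cpow hre
    rw [hs] at h0
    simp only [Complex.cpow_natCast] at h0
    have h1 : riemannZeta (2*((n:ℂ)+1))
        = ((∑' k:ℕ, 1/((k:ℝ)+1)^(2*n+2) : ℝ) : ℂ) := by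
      rw [← hs] at h0
      rw [h0, Complex.ofReal_tsum]
      exact tsum_congr (fun k => by push_cast; ring)
    rw [h1, rterm]
    rw [show -(2*((n:ℤ)+1)) = -(2*(n:ℤ)+2) by ring]
    push_cast [Complex.ofReal_zpow]
    ring
  rw [hfun]
  exact h2
end

section
/- For every positive integer m, ζ(2m) = (π^{2m} · (-1)^m / (2 · (1 - 2^{1-2m}))) · ( -1/Γ(2m+2) + Σ_{n=1}^{m-1} (2 - 2^{2m-2n}) · ζ(2n - 2m + 1) / (Γ(2n+2) · Γ(2m-2n)) ), where the sum over n is empty when m = 1. -/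
open Complex Real Finset
open Nat Polynomial

theorem bern_comp_one_sub (n : ℕ) :
    (Polynomial.bernoulli n).comp (1 - X) = (-1 : ℚ) ^ n • Polynomial.bernoulli n := by
  induction n with
  | zero => simp
  | succ n ih =>
    set p : ℚ[X] :=
      (Polynomial.bernoulli (n+1)).comp (1 - X) - (-1 : ℚ) ^ (n+1) • Polynomial.bernoulli (n+1)
      with hp
    have hder : Polynomial.derivative p = 0 := by
      rw [hp, derivative_sub, derivative_comp, derivative_bernoulli_add_one, derivative_smul,
        derivative_bernoulli_add_one, mul_comp, add_comp, natCast_comp, one_comp, ih]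
      simp only [derivative_sub, derivative_one, derivative_X, zero_sub, smul_eq_C_mul, pow_succ, mul_neg, mul_one, C_neg]
      ring
    have hdeg : p.natDegree = 0 := natDegree_eq_zero_of_derivative_eq_zero hder
    have hpc : p = C (p.coeff 0) := eq_C_of_natDegree_eq_zero hdeg
    have he : p.eval 0 = 0 := by
      rw [hp]
      simp only [eval_sub, eval_comp, eval_sub, eval_one, eval_X, sub_zero,
        Polynomial.bernoulli_eval_one, eval_smul, Polynomial.bernoulli_eval_zero, smul_eq_mul]
      rcases eq_or_ne (n+1) 1 with h1 | h1
      · rw [h1]; norm_num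
      · rw [bernoulli_eq_bernoulli'_of_ne_one h1]
        rcases Nat.even_or_odd (n+1) with he | ho
        · rw [he.neg_one_pow]; ring
        · rw [bernoulli'_eq_zero_of_odd ho (by omega)]; ring
    have : p = 0 := by
      rw [hpc] at he ⊢
      simpa using he
    exact sub_eq_zero.mp this

theorem bern_eval_half_eq_zero {n : ℕ} (hn : Odd n) :
    (Polynomial.bernoulli n).eval (1 / 2 : ℚ) = 0 := by
  have h := congrArg (Polynomial.eval (1 / 2 : ℚ)) (bern_comp_one_sub n)
  rw [eval_comp, eval_smul] at h
  simp only [eval_sub, eval_one, eval_X, hn.neg_one_pow, smul_eq_mul, neg_one_mul] at h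
  norm_num at h
  linarith

theorem sum_two_pow_choose_bernoulli {N : ℕ} (hN : Odd N) :
    ∑ j ∈ range (N + 1), (2 : ℚ) ^ j * (N.choose j) * _root_.bernoulli j = 0 := by
  have h0 : (2 : ℚ) ^ N * (Polynomial.bernoulli N).eval (1 / 2 : ℚ) = 0 := by
    rw [bern_eval_half_eq_zero hN, mul_zero]
  rw [← h0, Polynomial.bernoulli, eval_finset_sum, mul_sum]
  refine sum_congr rfl fun i hi => ?_
  rw [eval_monomial]
  have hiN : i ≤ N := by simpa [Nat.lt_succ_iff] using hi
  have h2 : (2 : ℚ) ^ N = 2 ^ i * 2 ^ (N - i) := by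
    rw [← pow_add]; congr 1; omega
  have h3 : ((1 : ℚ) / 2) ^ (N - i) = (2 ^ (N - i))⁻¹ := by
    rw [div_pow, one_pow, one_div]
  rw [h2, h3]
  have : (2 : ℚ) ^ (N - i) ≠ 0 := by positivity
  field_simp

theorem sum_range_even_odd (g : ℕ → ℚ) (M : ℕ) :
    ∑ j ∈ range (2 * M), g j =
      ∑ k ∈ range M, g (2 * k) + ∑ k ∈ range M, g (2 * k + 1) := by
  induction M with
  | zero => simp
  | succ M ih =>
    have : 2 * (M + 1) = (2 * M + 1) + 1 := by ring
    rw [this, sum_range_succ, sum_range_succ, sum_range_succ (fun k => g (2 * k)),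
      sum_range_succ (fun k => g (2 * k + 1)), ih]
    abel

theorem keyQ (m : ℕ) (hm : 0 < m) :
    ∑ k ∈ Icc 1 m, ((2 : ℚ) ^ (2 * k) - 2) * ((2 * m + 1).choose (2 * k)) * _root_.bernoulli (2 * k)
      = 1 := by
  set f : ℕ → ℚ := fun j => ((2 : ℚ) ^ j - 2) * ((2 * m + 1).choose j) * _root_.bernoulli j with hf
  have hodd : Odd (2 * m + 1) := ⟨m, by ring⟩
  have htot : ∑ j ∈ range (2 * (m + 1)), f j = 0 := by
    have h1 : ∑ j ∈ range (2 * m + 2), (2 : ℚ) ^ j * ((2 * m + 1).choose j) * _root_.bernoulli j = 0 := by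
      have := sum_two_pow_choose_bernoulli hodd
      simpa using this
    have h2 : ∑ j ∈ range (2 * m + 2), (((2 * m + 1).choose j : ℚ)) * _root_.bernoulli j = 0 := by
      rw [sum_range_succ, _root_.sum_bernoulli]
      have : _root_.bernoulli (2 * m + 1) = 0 := by
        rw [bernoulli_eq_bernoulli'_of_ne_one (by omega)]
        exact bernoulli'_eq_zero_of_odd hodd (by omega)
      rw [if_neg (by omega : ¬ 2 * m + 1 = 1)]
      simp [this]
    have : ∑ j ∈ range (2 * m + 2), f j =
        (∑ j ∈ range (2 * m + 2), (2 : ℚ) ^ j * ((2 * m + 1).choose j) * _root_.bernoulli j)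
          - 2 * ∑ j ∈ range (2 * m + 2), (((2 * m + 1).choose j : ℚ)) * _root_.bernoulli j := by
      rw [mul_sum, ← sum_sub_distrib]
      exact sum_congr rfl fun j _ => by rw [hf]; ring
    have h22 : 2 * (m + 1) = 2 * m + 2 := by ring
    rw [h22, this, h1, h2]; ring
  rw [sum_range_even_odd] at htot
  have hoddsum : ∑ k ∈ range (m + 1), f (2 * k + 1) = 0 := by
    refine sum_eq_zero fun k _ => ?_
    rcases Nat.eq_zero_or_pos k with rfl | hk
    · simp [hf]
    · have : _root_.bernoulli (2 * k + 1) = 0 := by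
        rw [bernoulli_eq_bernoulli'_of_ne_one (by omega)]
        exact bernoulli'_eq_zero_of_odd ⟨k, by ring⟩ (by omega)
      simp [hf, this]
  have hevensum : ∑ k ∈ range (m + 1), f (2 * k) =
      f 0 + ∑ k ∈ Icc 1 m, f (2 * k) := by
    rw [sum_range_succ' (fun k => f (2 * k)), ← Finset.Ico_add_one_right_eq_Icc 1 m,
      Finset.sum_Ico_eq_sum_range]
    rw [add_comm]
    congr 1
    exact sum_congr rfl fun i _ => by rw [show 2 * (i + 1) = 2 * (1 + i) by ring]
  have hf0 : f 0 = -1 := by norm_num [hf]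
  rw [hoddsum, hevensum, hf0] at htot
  linarith [htot]

theorem keyQ2 (m : ℕ) (hm : 0 < m) :
    ∑ k ∈ Icc 1 m, ((2 : ℚ) ^ (2 * k) - 2) * _root_.bernoulli (2 * k) /
        (((2 * k)! : ℚ) * ((2 * m - 2 * k + 1)! : ℚ)) = 1 / ((2 * m + 1)! : ℚ) := by
  have h : ∀ k ∈ Icc 1 m,
      ((2 : ℚ) ^ (2 * k) - 2) * _root_.bernoulli (2 * k) /
        (((2 * k)! : ℚ) * ((2 * m - 2 * k + 1)! : ℚ))
      = ((2 : ℚ) ^ (2 * k) - 2) * ((2 * m + 1).choose (2 * k)) * _root_.bernoulli (2 * k) /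
          ((2 * m + 1)! : ℚ) := by
    intro k hk
    simp only [mem_Icc] at hk
    rw [Nat.cast_choose ℚ (by omega : 2 * k ≤ 2 * m + 1),
      show 2 * m + 1 - 2 * k = 2 * m - 2 * k + 1 by omega]
    have h1 : ((2 * k)! : ℚ) ≠ 0 := by positivity
    have h2 : ((2 * m - 2 * k + 1)! : ℚ) ≠ 0 := by positivity
    have h3 : ((2 * m + 1)! : ℚ) ≠ 0 := by positivity
    field_simp
  rw [sum_congr rfl h, ← sum_div, keyQ m hm]

theorem keyQ3 (m : ℕ) (hm : 0 < m) :
    ∑ n ∈ Icc 1 (m - 1), ((2 : ℚ) ^ (2 * (m - n)) - 2) * _root_.bernoulli (2 * (m - n)) /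
        (((2 * n + 1)! : ℚ) * ((2 * (m - n))! : ℚ))
      = 1 / ((2 * m + 1)! : ℚ)
        - ((2 : ℚ) ^ (2 * m) - 2) * _root_.bernoulli (2 * m) / ((2 * m)! : ℚ) := by
  have h := keyQ2 m hm
  rw [show m = (m - 1) + 1 by omega] at h
  rw [Finset.sum_Icc_succ_top (by omega : 1 ≤ m - 1 + 1)] at h
  rw [show (m - 1) + 1 = m by omega] at h
  have hlast : ((2 : ℚ) ^ (2 * m) - 2) * _root_.bernoulli (2 * m) /
      (((2 * m)! : ℚ) * ((2 * m - 2 * m + 1)! : ℚ))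
      = ((2 : ℚ) ^ (2 * m) - 2) * _root_.bernoulli (2 * m) / ((2 * m)! : ℚ) := by
    rw [show 2 * m - 2 * m + 1 = 1 by omega]
    norm_num [Nat.factorial]
  rw [hlast] at h
  have hre : ∑ k ∈ Icc 1 (m - 1), ((2 : ℚ) ^ (2 * k) - 2) * _root_.bernoulli (2 * k) /
        (((2 * k)! : ℚ) * ((2 * m - 2 * k + 1)! : ℚ))
      = ∑ n ∈ Icc 1 (m - 1), ((2 : ℚ) ^ (2 * (m - n)) - 2) * _root_.bernoulli (2 * (m - n)) /
        (((2 * n + 1)! : ℚ) * ((2 * (m - n))! : ℚ)) := by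
    refine Finset.sum_nbij' (fun k => m - k) (fun n => m - n) ?_ ?_ ?_ ?_ ?_
    · intro a ha; simp only [mem_Icc] at *; omega
    · intro a ha; simp only [mem_Icc] at *; omega
    · intro a ha; simp only [mem_Icc] at ha; omega
    · intro a ha; simp only [mem_Icc] at ha; omega
    · intro k hk
      simp only [mem_Icc] at hk
      rw [show m - (m - k) = k by omega, show 2 * m - 2 * k + 1 = 2 * (m - k) + 1 by omega]
      ring
  rw [hre] at h
  linarith [h]

theorem keyC (m : ℕ) (hm : 0 < m) :
    ∑ n ∈ Icc 1 (m - 1), ((2 : ℂ) ^ (2 * (m - n)) - 2) *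
          ((_root_.bernoulli (2 * (m - n)) : ℚ) : ℂ) /
        (((2 * n + 1)! : ℂ) * ((2 * (m - n))! : ℂ))
      = 1 / ((2 * m + 1)! : ℂ)
        - ((2 : ℂ) ^ (2 * m) - 2) * ((_root_.bernoulli (2 * m) : ℚ) : ℂ) / ((2 * m)! : ℂ) := by
  have h := keyQ3 m hm
  have := congrArg (fun q : ℚ => (q : ℂ)) h
  push_cast at this ⊢
  convert this using 2


/-- For every positive integer `m`,
`ζ(2m) = (π^(2m) (-1)^m / (2 (1 - 2^(1-2m)))) ·
  (-1/Γ(2m+2) + Σ_{n=1}^{m-1} (2 - 2^(2m-2n)) ζ(2n-2m+1) / (Γ(2n+2) Γ(2m-2n)))`. -/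
theorem stmt_2 (m : ℕ) (hm : 0 < m) :
    riemannZeta (2 * (m : ℂ)) =
      (π : ℂ) ^ (2 * m) * (-1) ^ m / (2 * (1 - (2 : ℂ) ^ (1 - 2 * (m : ℤ)))) *
        (-1 / Complex.Gamma (2 * (m : ℂ) + 2) +
          ∑ n ∈ Finset.Icc 1 (m - 1),
            (2 - (2 : ℂ) ^ (2 * (m : ℤ) - 2 * n)) *
              riemannZeta ((2 * (n : ℤ) - 2 * m + 1 : ℤ) : ℂ) /
              (Complex.Gamma (2 * (n : ℂ) + 2) *
                Complex.Gamma (2 * (m : ℂ) - 2 * n))) := by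
  have hG1 : Complex.Gamma (2 * (m : ℂ) + 2) = ((2 * m + 1)! : ℂ) := by
    rw [show (2 * (m : ℂ) + 2) = ((2 * m + 1 : ℕ) : ℂ) + 1 by push_cast; ring,
      Complex.Gamma_nat_eq_factorial]
  have hterm : ∀ n ∈ Icc 1 (m - 1),
      (2 - (2 : ℂ) ^ (2 * (m : ℤ) - 2 * n)) *
        riemannZeta ((2 * (n : ℤ) - 2 * m + 1 : ℤ) : ℂ) /
        (Complex.Gamma (2 * (n : ℂ) + 2) * Complex.Gamma (2 * (m : ℂ) - 2 * n))
      = ((2 : ℂ) ^ (2 * (m - n)) - 2) * ((_root_.bernoulli (2 * (m - n)) : ℚ) : ℂ) /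
          (((2 * n + 1)! : ℂ) * ((2 * (m - n))! : ℂ)) := by
    intro n hn
    simp only [mem_Icc] at hn
    set j : ℕ := 2 * m - 2 * n - 1 with hj
    have hj1 : j + 1 = 2 * (m - n) := by omega
    have hzarg : ((2 * (n : ℤ) - 2 * m + 1 : ℤ) : ℂ) = -((j : ℕ) : ℂ) := by
      have h : (2 * (n : ℤ) - 2 * m + 1) = -(j : ℤ) := by omega
      rw [h]; push_cast; ring
    have hG2 : Complex.Gamma (2 * (n : ℂ) + 2) = ((2 * n + 1)! : ℂ) := by
      rw [show (2 * (n : ℂ) + 2) = ((2 * n + 1 : ℕ) : ℂ) + 1 by push_cast; ring,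
        Complex.Gamma_nat_eq_factorial]
    have hG3 : Complex.Gamma (2 * (m : ℂ) - 2 * n) = ((j ! : ℕ) : ℂ) := by
      have h1 : ((j : ℕ) : ℂ) + 1 + 2 * n = 2 * m := by
        have h2 : ((j + 1 + 2 * n : ℕ) : ℂ) = ((2 * m : ℕ) : ℂ) := by
          rw [show j + 1 + 2 * n = 2 * m by omega]
        push_cast at h2; linear_combination h2
      rw [show 2 * (m : ℂ) - 2 * n = ((j : ℕ) : ℂ) + 1 by linear_combination -h1,
        Complex.Gamma_nat_eq_factorial]
    have hzpow : (2 : ℂ) ^ (2 * (m : ℤ) - 2 * (n : ℤ)) = (2 : ℂ) ^ (2 * (m - n)) := by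
      rw [show (2 * (m : ℤ) - 2 * n) = ((2 * (m - n) : ℕ) : ℤ) by omega, zpow_natCast]
    rw [hzarg, riemannZeta_neg_nat_eq_bernoulli, hG2, hG3, hzpow]
    have hoddj : Odd j := ⟨m - n - 1, by omega⟩
    rw [hoddj.neg_one_pow, ← hj1]
    have hfac : (((j + 1)! : ℕ) : ℂ) = ((j : ℂ) + 1) * ((j ! : ℕ) : ℂ) := by
      rw [Nat.factorial_succ]; push_cast; ring
    rw [hfac]
    have h1 : ((j : ℂ) + 1) ≠ 0 := Nat.cast_add_one_ne_zero j
    have h2 : ((j ! : ℕ) : ℂ) ≠ 0 := by exact_mod_cast Nat.factorial_ne_zero j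
    have h3 : (((2 * n + 1)! : ℕ) : ℂ) ≠ 0 := by exact_mod_cast Nat.factorial_ne_zero _
    field_simp
    ring
  rw [riemannZeta_two_mul_nat hm.ne', hG1, Finset.sum_congr rfl hterm, keyC m hm]
  have hpow : (2 : ℂ) ^ (1 - 2 * (m : ℤ)) = 2 / (2 : ℂ) ^ (2 * m) := by
    rw [show (1 - 2 * (m : ℤ)) = 1 - ((2 * m : ℕ) : ℤ) by push_cast; ring,
      zpow_sub₀ two_ne_zero, zpow_one, zpow_natCast]
  rw [hpow]
  have h2m : ((2 : ℂ)) ^ (2 * m) ≠ 0 := pow_ne_zero _ two_ne_zero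
  have hne : ((2 : ℂ)) ^ (2 * m) ≠ 2 := by
    have h : ((2 ^ (2 * m) : ℕ) : ℂ) ≠ ((2 : ℕ) : ℂ) := by
      rw [Ne, Nat.cast_inj]
      have : 2 ^ 2 ≤ 2 ^ (2 * m) := Nat.pow_le_pow_right (by norm_num) (by omega)
      omega
    simpa using h
  have hden2 : (1 : ℂ) - 2 / 2 ^ (2 * m) ≠ 0 := by
    rw [Ne, sub_eq_zero]
    intro h
    have h2 := (div_eq_iff h2m).mp h.symm
    rw [one_mul] at h2
    exact hne h2.symm
  have hF : (((2 * m)! : ℕ) : ℂ) ≠ 0 := by exact_mod_cast Nat.factorial_ne_zero _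
  have hG : (((2 * m + 1)! : ℕ) : ℂ) ≠ 0 := by exact_mod_cast Nat.factorial_ne_zero _
  set t : ℂ := 2 ^ (2 * m - 1) with ht
  have hsplit : (2 : ℂ) ^ (2 * m) = t * 2 := by
    rw [ht, ← pow_succ]; congr 1; omega
  have ht0 : t ≠ 0 := by rw [ht]; exact pow_ne_zero _ two_ne_zero
  have hc : t * 2 - 2 ≠ 0 := by rw [← hsplit]; exact sub_ne_zero.mpr hne
  rw [pow_succ, hsplit]
  rw [hsplit] at hden2
  have hc1 : -1 + t ≠ 0 := fun h => hc (by linear_combination 2 * h)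
  field_simp [hden2, ht0, hF, hG, hc, hc1]
  ring_nf
  field_simp [hc1]
  ring
end

section
/- For every positive integer m, Σ_{n=0}^{m} C(2m, 2n) · B_{2n} · (2 - 2^{2n}) / (2n - 2m - 1) = 0, where C(2m, 2n) is the binomial coefficient. -/
open Finset Nat

open PowerSeries in
private lemma key_ps :
    (2 * bernoulliPowerSeries ℚ - rescale 2 (bernoulliPowerSeries ℚ)) * exp ℚ =
      rescale 2 (bernoulli'PowerSeries ℚ) := by
  have hE2 : (exp ℚ) ^ 2 = rescale (2 : ℚ) (exp ℚ) := by
    simpa using exp_pow_eq_rescale_exp (A := ℚ) 2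
  have hne : (exp ℚ) ^ 2 - 1 ≠ 0 := by
    intro h
    have h1 := congrArg (coeff 1) h
    rw [hE2] at h1
    simp [map_sub, coeff_rescale, coeff_exp, coeff_one] at h1
  apply mul_right_cancel₀ hne
  have hB := bernoulliPowerSeries_mul_exp_sub_one ℚ
  have hB' := bernoulli'PowerSeries_mul_exp_sub_one ℚ
  have hC : (C (R := ℚ)) 2 = 2 := map_ofNat (C (R := ℚ)) 2
  have hres : rescale (2:ℚ) (exp ℚ - 1) = (exp ℚ)^2 - 1 := by
    rw [map_sub, map_one, hE2]
  have h1 : rescale (2:ℚ) (bernoulliPowerSeries ℚ) * ((exp ℚ)^2 - 1) = 2 * X := by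
    rw [← hres, ← map_mul, hB, rescale_X, hC]
  have h2 : bernoulliPowerSeries ℚ * ((exp ℚ)^2 - 1) = X * (exp ℚ + 1) := by
    have h : (exp ℚ)^2 - 1 = (exp ℚ - 1) * (exp ℚ + 1) := by ring
    rw [h, ← mul_assoc, hB]
  have h3 : rescale (2:ℚ) (bernoulli'PowerSeries ℚ) * ((exp ℚ)^2 - 1) =
      2 * X * (exp ℚ)^2 := by
    rw [← hres, ← map_mul, hB', map_mul, rescale_X, hC, hE2]
  calc (2 * bernoulliPowerSeries ℚ - rescale 2 (bernoulliPowerSeries ℚ)) * exp ℚ *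
        ((exp ℚ)^2 - 1)
      = (2 * (bernoulliPowerSeries ℚ * ((exp ℚ)^2 - 1)) -
          rescale 2 (bernoulliPowerSeries ℚ) * ((exp ℚ)^2 - 1)) * exp ℚ := by ring
    _ = (2 * (X * (exp ℚ + 1)) - 2 * X) * exp ℚ := by rw [h1, h2]
    _ = 2 * X * (exp ℚ)^2 := by ring
    _ = rescale 2 (bernoulli'PowerSeries ℚ) * ((exp ℚ)^2 - 1) := h3.symm

private lemma aux_sum (m : ℕ) (hm : 0 < m) :
    ∑ i ∈ Finset.range (2*m+2),
      (2 - (2:ℚ)^i) * bernoulli i / (i ! * (2*m+1-i)!) = 0 := by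
  have h := congrArg (PowerSeries.coeff (2*m+1)) key_ps
  rw [PowerSeries.coeff_mul] at h
  have hodd : bernoulli' (2*m+1) = 0 :=
    bernoulli'_eq_zero_of_odd ⟨m, by ring⟩ (by omega)
  have hR : (PowerSeries.coeff (2*m+1)) (PowerSeries.rescale 2 (bernoulli'PowerSeries ℚ)) = 0 := by
    rw [PowerSeries.coeff_rescale]
    simp [bernoulli'PowerSeries, hodd]
  rw [hR] at h
  rw [Finset.Nat.sum_antidiagonal_eq_sum_range_succ_mk] at h
  have hrange : (2*m+1).succ = 2*m+2 := rfl
  rw [hrange] at h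
  have hcoeff : ∀ i : ℕ,
      (PowerSeries.coeff i)
        (2 * bernoulliPowerSeries ℚ - PowerSeries.rescale 2 (bernoulliPowerSeries ℚ)) =
        (2 - (2:ℚ)^i) * bernoulli i / i ! := by
    intro i
    rw [(map_ofNat (PowerSeries.C (R := ℚ)) 2).symm, map_sub,
      PowerSeries.coeff_C_mul, PowerSeries.coeff_rescale]
    simp only [bernoulliPowerSeries, PowerSeries.coeff_mk, Algebra.algebraMap_self,
      RingHom.id_apply]
    ring
  rw [← h]
  apply Finset.sum_congr rfl
  intro i hi
  simp only
  rw [hcoeff, PowerSeries.coeff_exp]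
  have halg : (algebraMap ℚ ℚ) (1 / ((2*m+1-i)! : ℚ)) = 1 / ((2*m+1-i)! : ℚ) := by simp
  rw [halg]
  generalize ((2*m+1-i)! : ℚ) = j
  generalize ((i)! : ℚ) = a
  ring

private lemma sum_range_two_mul (f : ℕ → ℚ) (k : ℕ) :
    ∑ i ∈ Finset.range (2*k), f i = ∑ n ∈ Finset.range k, (f (2*n) + f (2*n+1)) := by
  induction k with
  | zero => simp
  | succ k ih =>
    have h : 2*(k+1) = 2*k+1+1 := by ring
    rw [h, Finset.sum_range_succ, Finset.sum_range_succ, ih, Finset.sum_range_succ,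
      add_assoc]

/-- For every positive integer `m`,
`Σ_{n=0}^{m} C(2m, 2n) B_{2n} (2 - 2^(2n)) / (2n - 2m - 1) = 0`. -/
theorem stmt_4 (m : ℕ) (hm : 0 < m) :
    ∑ n ∈ Finset.range (m + 1),
      (Nat.choose (2 * m) (2 * n) : ℚ) * bernoulli (2 * n) * (2 - (2 : ℚ) ^ (2 * n)) /
        ((2 * (n : ℤ) - 2 * m - 1 : ℤ) : ℚ) = 0 := by
  have key := aux_sum m hm
  rw [show 2*m+2 = 2*(m+1) by ring,
    sum_range_two_mul (fun i => (2 - (2:ℚ)^i) * bernoulli i / (i ! * (2*m+1-i)!))] at key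
  have key2 : ∑ n ∈ Finset.range (m+1),
      (2 - (2:ℚ)^(2*n)) * bernoulli (2*n) / ((2*n)! * (2*m+1-2*n)!) = 0 := by
    rw [← key]
    apply Finset.sum_congr rfl
    intro n _
    have hz : (2 - (2:ℚ)^(2*n+1)) * bernoulli (2*n+1) = 0 := by
      rcases Nat.eq_zero_or_pos n with rfl | hn
      · norm_num
      · have : bernoulli (2*n+1) = 0 := by
          rw [bernoulli_eq_bernoulli'_of_ne_one (by omega)]
          exact bernoulli'_eq_zero_of_odd ⟨n, by ring⟩ (by omega)
        rw [this, mul_zero]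
    simp [hz]
  have : ∑ n ∈ Finset.range (m + 1),
      (Nat.choose (2 * m) (2 * n) : ℚ) * bernoulli (2 * n) * (2 - (2 : ℚ) ^ (2 * n)) /
        ((2 * (n : ℤ) - 2 * m - 1 : ℤ) : ℚ)
      = ∑ n ∈ Finset.range (m+1), (-(2*m)!) *
        ((2 - (2:ℚ)^(2*n)) * bernoulli (2*n) / ((2*n)! * (2*m+1-2*n)!)) := by
    apply Finset.sum_congr rfl
    intro n hn
    have hle : 2*n ≤ 2*m := by
      have := Finset.mem_range.mp hn; omega
    have hsub : 2*m+1-2*n = (2*m-2*n)+1 := by omega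
    rw [Nat.cast_choose ℚ hle, hsub, Nat.factorial_succ]
    have hcast : ((2 * (n : ℤ) - 2 * m - 1 : ℤ) : ℚ) = -(((2*m-2*n : ℕ) : ℚ) + 1) := by
      have h2 : ((2*m - 2*n : ℕ) : ℚ) = 2*m - 2*n := by push_cast [hle]; ring
      rw [h2]; push_cast; ring
    rw [hcast, div_neg, Nat.cast_mul]
    have hf1 : ((2*n)! : ℚ) ≠ 0 := by exact_mod_cast (2*n).factorial_ne_zero
    have hf2 : ((2*m-2*n)! : ℚ) ≠ 0 := by exact_mod_cast (2*m-2*n).factorial_ne_zero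
    have hf3 : ((2*m-2*n : ℕ) : ℚ) + 1 ≠ 0 := by positivity
    have hcast2 : ((2*m-2*n+1 : ℕ) : ℚ) = ((2*m-2*n : ℕ) : ℚ) + 1 := by push_cast; ring
    rw [hcast2]
    generalize ((2*m-2*n : ℕ) : ℚ) = d at hf3
    field_simp
  rw [this, ← Finset.mul_sum, key2, mul_zero]
end

section
/- For every positive integer n, the derivative of the Riemann zeta function at the negative even integer -2n satisfies ζ'(-2n) = (-1)^n · Γ(2n+1) / (2 · (2π)^{2n}) · ζ(2n+1). -/
open Complex Real

lemma aux_cos_nat_mul_pi (n : ℕ) : Complex.cos ((n : ℂ) * (π : ℂ)) = (-1) ^ n := by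
  have : ((n : ℂ) * (π : ℂ)) = (((n : ℝ) * π : ℝ) : ℂ) := by push_cast; ring
  rw [this, ← Complex.ofReal_cos]
  have := Real.cos_nat_mul_pi_sub 0 n
  simp at this
  rw [this]
  push_cast
  ring

lemma aux_sin (n : ℕ) :
    Complex.sin ((π : ℂ) * (2 * (n : ℂ) + 1) / 2) = (-1) ^ n := by
  have h : (π : ℂ) * (2 * (n : ℂ) + 1) / 2 = (n : ℂ) * π + π / 2 := by ring
  rw [h, Complex.sin_add, Complex.sin_nat_mul_pi, Complex.sin_pi_div_two,
    Complex.cos_pi_div_two, aux_cos_nat_mul_pi]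
  ring

lemma aux_cos (n : ℕ) :
    Complex.cos ((π : ℂ) * (2 * (n : ℂ) + 1) / 2) = 0 := by
  have h : (π : ℂ) * (2 * (n : ℂ) + 1) / 2 = (n : ℂ) * π + π / 2 := by ring
  rw [h, Complex.cos_add, Complex.sin_nat_mul_pi, Complex.sin_pi_div_two,
    Complex.cos_pi_div_two]
  ring

/-- For every positive integer `n`,
`ζ'(-2n) = (-1)^n Γ(2n+1) / (2 (2π)^(2n)) · ζ(2n+1)`. -/
theorem stmt_8 (n : ℕ) (hn : 0 < n) :
    deriv riemannZeta (-(2 * (n : ℂ))) =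
      (-1) ^ n * Complex.Gamma (2 * (n : ℂ) + 1) / (2 * (2 * (π : ℂ)) ^ (2 * n)) *
        riemannZeta (2 * (n : ℂ) + 1) := by
  set s₀ : ℂ := 2 * (n : ℂ) + 1 with hs₀
  have hpi : (0:ℝ) < π := Real.pi_pos
  have h2pi : (2 * (π : ℂ)) ≠ 0 := by
    simp [Complex.ofReal_ne_zero, hpi.ne']
  have hre : (1:ℝ) < s₀.re := by
    simp only [hs₀]
    push_cast
    simp only [Complex.add_re, Complex.mul_re, Complex.one_re]
    norm_num [Complex.natCast_re]
    exact_mod_cast hn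
  have hne1 : s₀ ≠ 1 := by
    intro h; rw [h] at hre; simp at hre
  -- derivative of left-hand side function
  have hζ₀ : DifferentiableAt ℂ riemannZeta (1 - s₀) := by
    apply differentiableAt_riemannZeta
    intro h
    rw [sub_eq_iff_eq_add] at h
    have : s₀.re = 0 := by
      have := congrArg Complex.re h
      simpa using this
    rw [this] at hre; norm_num at hre
  have h1 : HasDerivAt (fun s => riemannZeta (1 - s))
      (deriv riemannZeta (1 - s₀) * (-1)) s₀ := by
    exact HasDerivAt.comp s₀ hζ₀.hasDerivAt ((hasDerivAt_id s₀).const_sub 1)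
  -- derivative of right-hand side function
  have hp : HasDerivAt (fun s : ℂ => (2 * (π : ℂ)) ^ (-s))
      ((2 * (π : ℂ)) ^ (-s₀) * Complex.log (2 * π) * (-1)) s₀ := by
    exact HasDerivAt.comp s₀ ((hasStrictDerivAt_const_cpow (Or.inl h2pi)).hasDerivAt)
      (hasDerivAt_neg s₀)
  have hΓ : DifferentiableAt ℂ Complex.Gamma s₀ := by
    apply Complex.differentiableAt_Gamma
    intro m h
    have := congrArg Complex.re h
    simp [Complex.neg_re, Complex.natCast_re] at this
    rw [this] at hre
    have : (0:ℝ) ≤ (m:ℝ) := by positivity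
    linarith
  have hζ : DifferentiableAt ℂ riemannZeta s₀ := differentiableAt_riemannZeta hne1
  have hC : HasDerivAt (fun s : ℂ => Complex.cos ((π : ℂ) * s / 2))
      (-Complex.sin ((π : ℂ) * s₀ / 2) * ((π : ℂ) / 2)) s₀ := by
    have harg : HasDerivAt (fun s : ℂ => (π : ℂ) * s / 2) ((π : ℂ) / 2) s₀ := by
      simpa using ((hasDerivAt_id s₀).const_mul (π : ℂ)).div_const 2
    exact HasDerivAt.comp s₀ (Complex.hasDerivAt_cos _) harg
  have h2 : HasDerivAt
      (fun s : ℂ => 2 * (2 * (π : ℂ)) ^ (-s) * Complex.Gamma s *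
        Complex.cos ((π : ℂ) * s / 2) * riemannZeta s)
      ((((2 * (2 * (π : ℂ)) ^ (-s₀) * Complex.log (2 * π) * (-1)) * Complex.Gamma s₀ +
          2 * (2 * (π : ℂ)) ^ (-s₀) * deriv Complex.Gamma s₀) *
            Complex.cos ((π : ℂ) * s₀ / 2) +
        (2 * (2 * (π : ℂ)) ^ (-s₀) * Complex.Gamma s₀) *
          (-Complex.sin ((π : ℂ) * s₀ / 2) * ((π : ℂ) / 2))) * riemannZeta s₀ +
        (2 * (2 * (π : ℂ)) ^ (-s₀) * Complex.Gamma s₀ *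
          Complex.cos ((π : ℂ) * s₀ / 2)) * deriv riemannZeta s₀) s₀ := by
    have := (((hp.const_mul 2).mul hΓ.hasDerivAt).mul hC).mul hζ.hasDerivAt
    exact this.congr_deriv (by simp only [Pi.mul_apply]; ring)
  -- the two functions agree near s₀
  have heq : (fun s => riemannZeta (1 - s)) =ᶠ[nhds s₀]
      (fun s : ℂ => 2 * (2 * (π : ℂ)) ^ (-s) * Complex.Gamma s *
        Complex.cos ((π : ℂ) * s / 2) * riemannZeta s) := by
    have hcont : ∀ᶠ s in nhds s₀, 1 < s.re :=
      (Complex.continuous_re.continuousAt).eventually (eventually_gt_nhds hre)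
    filter_upwards [hcont] with s hs
    apply riemannZeta_one_sub
    · intro m h
      have := congrArg Complex.re h
      simp [Complex.neg_re, Complex.natCast_re] at this
      rw [this] at hs
      have : (0:ℝ) ≤ (m:ℝ) := by positivity
      linarith
    · intro h; rw [h] at hs; simp at hs
  have h2' := h2.congr_of_eventuallyEq heq
  have hkey := h1.unique h2'
  rw [aux_cos, aux_sin] at hkey
  have h1s : 1 - s₀ = -(2 * (n : ℂ)) := by rw [hs₀]; ring
  rw [h1s] at hkey
  -- simplify the cpow
  have hcp : (2 * (π : ℂ)) ^ (-s₀) = ((2 * (π : ℂ)) ^ (2 * n + 1))⁻¹ := by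
    have : s₀ = ((2 * n + 1 : ℕ) : ℂ) := by rw [hs₀]; push_cast; ring
    rw [this, Complex.cpow_neg, Complex.cpow_natCast]
  rw [hcp] at hkey
  have hpow : (2 * (π : ℂ)) ^ (2 * n + 1) ≠ 0 := pow_ne_zero _ h2pi
  have hζs : riemannZeta s₀ = riemannZeta (2 * (n : ℂ) + 1) := by rw [hs₀]
  have hΓs : Complex.Gamma s₀ = Complex.Gamma (2 * (n : ℂ) + 1) := by rw [hs₀]
  rw [hζs, hΓs] at hkey
  simp only [mul_zero, zero_mul, add_zero, zero_add] at hkey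
  have hpow2 : (2 * (π : ℂ)) ^ (2 * n) ≠ 0 := pow_ne_zero _ h2pi
  have hπ : (π : ℂ) ≠ 0 := by simpa [Complex.ofReal_ne_zero] using hpi.ne'
  rw [pow_succ] at hkey
  field_simp at hkey
  rw [hΓs, hζs, div_mul_eq_mul_div, eq_div_iff (mul_ne_zero two_ne_zero hpow2)]
  apply mul_right_cancel₀ h2pi
  linear_combination (-(2 * (π : ℂ))) * hkey
end
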